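/- Let p ≥ 3 be a prime, d ≥ 1, and r with p^r > d. Let μ be a partition of d + p^r with at most n parts satisfying the Doty digit condition, and suppose μ_1 ≥ p^r. Then μ_1 − μ_2 ≥ p^r, and (μ_1 − p^r, μ_2, …, μ_n) is a partition of d with at most n parts satisfying the Doty digit condition. (This is the combinatorial heart of Lemma 7.5: every composition factor L(μ) of H^0(d + p^r) with μ_1 ≥ p^r has the form L(μ̃ + p^r) for a composition factor L(μ̃) of H^0(d).) -/

import Mathlib

/-- `l` is a partition of `d` with at most `n` parts: a weakly decreasing tuple
(indexed from 0, vanishing from index `n` on) of nonnegative integers summing to `d`. -/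
def IsPartition (n d : ℕ) (l : ℕ → ℕ) : Prop :=
  Antitone l ∧ (∀ i, n ≤ i → l i = 0) ∧ ∑ i ∈ Finset.range n, l i = d

/-- Doty digit condition: if the `j`-th base-`p` digit of the `i`-th part is not `p - 1`,
then the `j`-th digit of every later part is `0`. -/
def DotyCondition (p : ℕ) (l : ℕ → ℕ) : Prop :=
  ∀ i j i', i < i' → (l i / p ^ j) % p ≠ p - 1 → (l i' / p ^ j) % p = 0

/-- `Dominates l m` : `l` dominates `m`, i.e. `m ⊴ l`. -/
def Dominates (l m : ℕ → ℕ) : Prop :=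
  ∀ k, ∑ i ∈ Finset.range k, m i ≤ ∑ i ∈ Finset.range k, l i

private lemma mod_pow_succ_eq (p r x : ℕ) (hp : 0 < p) :
    x % p ^ (r + 1) = p * ((x / p) % p ^ r) + x % p := by
  have hpr : 0 < p ^ r := Nat.pow_pos hp
  set Q := x / p / p ^ r with hQ
  set s := (x / p) % p ^ r with hs
  have e : x = p * p ^ r * Q + (p * s + x % p) := by
    conv_lhs => rw [← Nat.div_add_mod x p, ← Nat.div_add_mod (x / p) (p ^ r)]
    ring
  have hslt : s < p ^ r := Nat.mod_lt _ hpr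
  have hxp : x % p < p := Nat.mod_lt _ hp
  have hc : p * s + x % p < p * p ^ r := by
    have h6 : p * (s + 1) ≤ p * p ^ r := Nat.mul_le_mul_left _ (by omega)
    have : p * (s + 1) = p * s + p := by ring
    omega
  have key : x % (p * p ^ r) = p * s + x % p := by
    conv_lhs => rw [e]
    rw [Nat.mul_add_mod, Nat.mod_eq_of_lt hc]
  rw [pow_succ']
  exact key

private lemma key_le (p : ℕ) (hp : 1 < p) (r : ℕ) : ∀ x y : ℕ, y < p ^ r →
    (∀ j, (x / p ^ j) % p ≠ p - 1 → (y / p ^ j) % p = 0) → y ≤ x % p ^ r := by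
  induction r with
  | zero =>
    intro x y hy _
    simp only [pow_zero, Nat.lt_one_iff] at hy
    simp [hy]
  | succ r ih =>
    intro x y hy H
    have hp0 : 0 < p := by omega
    have h1 : y / p ≤ (x / p) % p ^ r := by
      apply ih
      · rw [Nat.div_lt_iff_lt_mul hp0, ← pow_succ]; exact hy
      · intro j hj
        have hxd : (x / p) / p ^ j = x / p ^ (j + 1) := by
          rw [Nat.div_div_eq_div_mul, pow_succ']
        have hyd : (y / p) / p ^ j = y / p ^ (j + 1) := by
          rw [Nat.div_div_eq_div_mul, pow_succ']
        rw [hxd] at hj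
        rw [hyd]
        exact H (j + 1) hj
    have h2 : y % p ≤ x % p := by
      by_cases h : y % p = 0
      · omega
      · have hx : x % p = p - 1 := by
          by_contra hx
          have := H 0 (by simpa using hx)
          simp at this
          omega
        have : y % p < p := Nat.mod_lt _ hp0
        omega
    have e1 := mod_pow_succ_eq p r x hp0
    have e2 := Nat.div_add_mod y p
    have h3 : p * (y / p) ≤ p * ((x / p) % p ^ r) := Nat.mul_le_mul_left _ h1
    omega

private lemma digit_sub_eq (p j r x : ℕ) (hp : 0 < p) (hj : j < r) (hx : p ^ r ≤ x) :
    ((x - p ^ r) / p ^ j) % p = (x / p ^ j) % p := by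
  have hdvd : p ^ (j + 1) ∣ p ^ r := pow_dvd_pow p hj
  have hmod : (x - p ^ r) % p ^ (j + 1) = x % p ^ (j + 1) :=
    (Nat.modEq_iff_dvd' (Nat.sub_le x (p ^ r))).mpr (by rwa [Nat.sub_sub_self hx])
  rw [← Nat.mod_mul_right_div_self, ← Nat.mod_mul_right_div_self, ← pow_succ, hmod]

theorem mu_large_first_part_comes_from_smaller_symmetric_power
    (p n d r : ℕ) (hp : p.Prime) (hp3 : 3 ≤ p) (hd : 1 ≤ d) (hr : d < p ^ r)
    (mu : ℕ → ℕ) (hmu : IsPartition n (d + p ^ r) mu) (hD : DotyCondition p mu)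
    (h1 : p ^ r ≤ mu 0) :
    mu 1 + p ^ r ≤ mu 0 ∧
      IsPartition n d (fun i => if i = 0 then mu 0 - p ^ r else mu i) ∧
      DotyCondition p (fun i => if i = 0 then mu 0 - p ^ r else mu i) := by
  obtain ⟨hmono, hzero, hsum⟩ := hmu
  have hp1 : 1 < p := by omega
  have hpr1 : 1 ≤ p ^ r := Nat.one_le_pow _ _ (by omega)
  have hn : 1 ≤ n := by
    by_contra h
    push_neg at h
    interval_cases n
    simp at hsum
    omega
  have hmu1 : mu 1 ≤ d := by
    rcases Nat.lt_or_ge 1 n with h2 | h2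
    · have hle : ∑ i ∈ Finset.range 2, mu i ≤ ∑ i ∈ Finset.range n, mu i :=
        Finset.sum_le_sum_of_subset (Finset.range_subset_range.mpr h2)
      rw [hsum] at hle
      simp [Finset.sum_range_succ] at hle
      omega
    · have : mu 1 = 0 := hzero 1 h2
      omega
  have hkey : mu 1 ≤ mu 0 % p ^ r :=
    key_le p hp1 r (mu 0) (mu 1) (by omega) (fun j hj => hD 0 j 1 Nat.one_pos hj)
  have hdiv : 1 ≤ mu 0 / p ^ r := (Nat.one_le_div_iff (by omega)).mpr h1
  have hge : mu 1 + p ^ r ≤ mu 0 := by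
    have e := Nat.div_add_mod (mu 0) (p ^ r)
    have : p ^ r * 1 ≤ p ^ r * (mu 0 / p ^ r) := Nat.mul_le_mul_left _ hdiv
    omega
  refine ⟨hge, ⟨?_, ?_, ?_⟩, ?_⟩
  · apply antitone_nat_of_succ_le
    intro i
    cases i with
    | zero => simpa using Nat.le_sub_of_add_le hge
    | succ k =>
      simp only [Nat.succ_ne_zero, if_neg, Nat.add_eq_zero, and_false]
      exact hmono (Nat.le_succ _)
  · intro i hi
    have hi0 : i ≠ 0 := by omega
    simp only [hi0, if_false]
    exact hzero i hi
  · obtain ⟨m, rfl⟩ : ∃ m, n = m + 1 := ⟨n - 1, by omega⟩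
    rw [Finset.sum_range_succ'] at hsum ⊢
    simp only [Nat.succ_ne_zero, if_false, if_pos rfl, if_true]
    have hc : ∑ i ∈ Finset.range m, (if i + 1 = 0 then mu 0 - p ^ r else mu (i + 1)) =
        ∑ i ∈ Finset.range m, mu (i + 1) :=
      Finset.sum_congr rfl (fun i _ => by simp)
    omega
  · intro i j i' hii' hne
    have hi' : i' ≠ 0 := by omega
    simp only [hi', if_false]
    by_cases hi : i = 0
    · subst hi
      have hne' : (mu 0 - p ^ r) / p ^ j % p ≠ p - 1 := by simpa using hne
      clear hne
      by_cases hjr : j < r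
      · rw [digit_sub_eq p j r (mu 0) (by omega) hjr h1] at hne'
        exact hD 0 j i' hii' hne' 
      · have hle : mu i' ≤ mu 1 := hmono (by omega)
        have hlt : mu i' < p ^ j :=
          lt_of_le_of_lt (le_trans hle hmu1)
            (lt_of_lt_of_le hr (Nat.pow_le_pow_right (by omega) (by omega)))
        rw [Nat.div_eq_of_lt hlt]
        simp
    · simp only [hi, if_false] at hne
      exact hD i j i' hii' hne
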